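/- Let α, β ∈ ℂ satisfy α² ∉ {0,1}, β² ∉ {0,1}, α² ≠ β², and α²β² ≠ 1. If (x, y) ∈ ℂ² satisfies y² = x(x−1)(x−α²)(x−β²)(x−α²β²) and x ≠ −αβ, then the point (X, Y) with X = (α+β)²x/(x+αβ)² and Y = −(α+β)²y/((αβ+1)(x+αβ)³) satisfies Y² = X(X−1)(X − (α+β)²/(αβ+1)²). -/

import Mathlib

set_option maxRecDepth 8000
set_option maxHeartbeats 2000000

theorem stmt_1 (α β x y : ℂ)
    (hα0 : α^2 ≠ 0) (hα1 : α^2 ≠ 1) (hβ0 : β^2 ≠ 0) (hβ1 : β^2 ≠ 1)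
    (hαβ : α^2 ≠ β^2) (hαβ1 : α^2 * β^2 ≠ 1)
    (hV : y^2 = x * (x - 1) * (x - α^2) * (x - β^2) * (x - α^2 * β^2))
    (hx : x ≠ -(α * β)) :
    (-((α + β)^2 * y) / ((α * β + 1) * (x + α * β)^3))^2 =
      ((α + β)^2 * x / (x + α * β)^2) *
      ((α + β)^2 * x / (x + α * β)^2 - 1) *
      ((α + β)^2 * x / (x + α * β)^2 - (α + β)^2 / (α * β + 1)^2) := by
  have hd : x + α * β ≠ 0 := fun h => hx (by linear_combination h)
  have h1 : α * β + 1 ≠ 0 := fun h => hαβ1 (by linear_combination (α*β-1)*h)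
  field_simp
  linear_combination ((α+β)^4) * hV
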